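/- Let P ⊆ ℝ^n be a convex set, m ≥ 2, ω > 0, and let f_1, …, f_m : P → ℝ be convex functions with |f_j(x)| ≤ ω for all x ∈ P and all j. Fix T ≥ 1 and 0 < η ≤ 1/2, and define the dual Multiplicative Weights dynamics: u^1_j = 1, p_t = u^t / Σ_j u^t_j ∈ S_m, and u^{t+1}_j = u^t_j · (1 + η f_j(x_t)/ω), where x_1, …, x_T ∈ P is any sequence of points satisfying Σ_{j=1}^m p_t(j) f_j(x_t) ≤ 0 for every t (the optimization oracle succeeds at every step). Then the average x̄ = (1/T) Σ_{t=1}^T x_t satisfies f_j(x̄) ≤ ηω + (ω log m)/(ηT) for every j ∈ [m]. In particular, taking η = √(log m / T) with T ≥ 4ω² log m / ε² (so that η ≤ 1/2), the point x̄ is an ε-approximate solution: f_j(x̄) ≤ ε for all j. -/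

import Mathlib

/-- Key analytic fact behind Multiplicative Weights: `log(1+z) ≥ z - z²` for `|z| ≤ 1/2`. -/
lemma key_log_quadratic (z : ℝ) (hz : |z| ≤ 1/2) : z - z^2 ≤ Real.log (1+z) := by
  obtain ⟨hz1, hz2⟩ := abs_le.1 hz
  have h1 : |(-z)| < 1 := by rw [abs_neg]; linarith
  have h := Real.abs_log_sub_add_sum_range_le h1 4
  rw [show (1 : ℝ) - -z = 1 + z by ring] at h
  simp only [Finset.sum_range_succ, Finset.sum_range_zero] at h
  norm_num at h
  have h0 := abs_nonneg z
  have h2 : (1:ℝ)/2 ≤ 1 - |z| := by linarith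
  have hB : |z| ^ 5 / (1 - |z|) ≤ z ^ 4 := by
    have e : |z| ^ 5 = |z| * z ^ 4 := by
      rw [show |z| ^ 5 = |z| * |z| ^ 4 by ring, ← abs_pow,
        abs_of_nonneg (by positivity : (0:ℝ) ≤ z ^ 4)]
    have h5 : |z| ^ 5 ≤ (1/2) * z ^ 4 := by
      rw [e]; exact mul_le_mul_of_nonneg_right hz (by positivity)
    calc |z| ^ 5 / (1 - |z|) ≤ |z| ^ 5 / (1/2) :=
          div_le_div_of_nonneg_left (by positivity) (by norm_num) h2
      _ = 2 * |z| ^ 5 := by ring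
      _ ≤ z ^ 4 := by linarith
  have h' := (abs_le.1 h).1
  have hz3 : -(z^2)/2 ≤ z^3 := by nlinarith
  have hz4 : z^4 ≤ z^2/4 := by nlinarith [sq_nonneg z]
  nlinarith [hB, h', sq_nonneg z]

/-- The classical lagrangian-relaxation guarantee (`DualGameOpt` instantiated with
Multiplicative Weights): with `u¹ⱼ = 1`, `pₜ = uᵗ/∑ⱼ uᵗⱼ`,
`uᵗ⁺¹ⱼ = uᵗⱼ (1 + η fⱼ(xₜ)/ω)`, and any points `xₜ ∈ P` with
`∑ⱼ pₜ(j) fⱼ(xₜ) ≤ 0` at every step, the average `x̄ = (1/T) ∑ₜ xₜ` satisfies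
`fⱼ(x̄) ≤ ηω + (ω log m)/(ηT)` for all `j`; in particular, for
`η = √(log m / T)` and `T ≥ 4ω² log m / ε²` it is an `ε`-approximate solution. -/
theorem dualMW_width_bound {n m : ℕ} (hm : 2 ≤ m) (T : ℕ) (hT : 1 ≤ T)
    (P : Set (Fin n → ℝ)) (hP : Convex ℝ P)
    (f : Fin m → (Fin n → ℝ) → ℝ) (hfconv : ∀ j, ConvexOn ℝ P (f j))
    (ω : ℝ) (hω : 0 < ω) (hfb : ∀ j, ∀ x ∈ P, |f j x| ≤ ω)
    (η : ℝ) (hη₀ : 0 < η) (hη : η ≤ 1 / 2)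
    (x : ℕ → Fin n → ℝ) (hx : ∀ t, t < T → x t ∈ P)
    (u : ℕ → Fin m → ℝ) (hu0 : ∀ j, u 0 j = 1)
    (p : ℕ → Fin m → ℝ) (hp : ∀ t j, p t j = u t j / ∑ k, u t k)
    (hu : ∀ t, t < T → ∀ j, u (t + 1) j = u t j * (1 + η * f j (x t) / ω))
    (horacle : ∀ t, t < T → ∑ j, p t j * f j (x t) ≤ 0) :
    ((T : ℝ)⁻¹ • ∑ t ∈ Finset.range T, x t) ∈ P ∧
    (∀ j, f j ((T : ℝ)⁻¹ • ∑ t ∈ Finset.range T, x t) ≤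
        η * ω + ω * Real.log m / (η * T)) ∧
    (∀ ε : ℝ, 0 < ε → η = Real.sqrt (Real.log m / T) →
        4 * ω ^ 2 * Real.log m / ε ^ 2 ≤ (T : ℝ) →
        ∀ j, f j ((T : ℝ)⁻¹ • ∑ t ∈ Finset.range T, x t) ≤ ε) := by
  haveI : Nonempty (Fin m) := ⟨⟨0, by omega⟩⟩
  have hm1 : (1:ℝ) < m := by exact_mod_cast lt_of_lt_of_le one_lt_two hm
  have hTpos : (0:ℝ) < T := by exact_mod_cast hT
  have hωne : ω ≠ 0 := ne_of_gt hω
  -- average: rewriting and membership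
  have hxbar_eq : (T : ℝ)⁻¹ • ∑ t ∈ Finset.range T, x t
      = ∑ t ∈ Finset.range T, (T:ℝ)⁻¹ • x t := Finset.smul_sum
  have hw0 : ∀ t ∈ Finset.range T, (0:ℝ) ≤ (T:ℝ)⁻¹ := fun _ _ => by positivity
  have hw1 : ∑ _t ∈ Finset.range T, (T:ℝ)⁻¹ = 1 := by
    rw [Finset.sum_const, Finset.card_range, nsmul_eq_mul, mul_inv_cancel₀ (ne_of_gt hTpos)]
  have hmemx : ∀ t ∈ Finset.range T, x t ∈ P := fun t ht => hx t (Finset.mem_range.1 ht)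
  have hbar_mem : ((T : ℝ)⁻¹ • ∑ t ∈ Finset.range T, x t) ∈ P := by
    rw [hxbar_eq]; exact hP.sum_mem hw0 hw1 hmemx
  -- the multiplicative factors are at least 1/2
  have hfac : ∀ t, t < T → ∀ j, (1/2 : ℝ) ≤ 1 + η * f j (x t) / ω := by
    intro t ht j
    have hf := (abs_le.1 (hfb j (x t) (hx t ht))).1
    have hd : -η ≤ η * f j (x t) / ω := by
      rw [le_div_iff₀ hω]; nlinarith
    linarith
  -- positivity of weights
  have hpos : ∀ t, t ≤ T → ∀ j, 0 < u t j := by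
    intro t
    induction t with
    | zero => intro _ j; rw [hu0]; norm_num
    | succ t ih =>
      intro ht j
      have ht' : t < T := ht
      rw [hu t ht' j]
      exact mul_pos (ih ht'.le j) (lt_of_lt_of_le (by norm_num) (hfac t ht' j))
  have hSpos : ∀ t, t ≤ T → 0 < ∑ k, u t k := fun t ht =>
    Finset.sum_pos (fun j _ => hpos t ht j) Finset.univ_nonempty
  -- total weight is nonincreasing, hence at most m
  have hSle : ∀ t, t ≤ T → ∑ k, u t k ≤ (m:ℝ) := by
    intro t
    induction t with
    | zero => intro _; simp [hu0]
    | succ t ih =>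
      intro ht
      have ht' : t < T := ht
      have hSt := hSpos t ht'.le
      have hSne : (∑ k, u t k) ≠ 0 := ne_of_gt hSt
      have hA : ∑ j, u t j * f j (x t) = (∑ k, u t k) * ∑ j, p t j * f j (x t) := by
        rw [Finset.mul_sum]
        refine Finset.sum_congr rfl fun j _ => ?_
        rw [hp t j]; field_simp
      have hstep : ∑ k, u (t+1) k
          = (∑ k, u t k) + (η/ω) * ∑ j, u t j * f j (x t) := by
        rw [Finset.mul_sum, ← Finset.sum_add_distrib]
        refine Finset.sum_congr rfl fun j _ => ?_
        rw [hu t ht' j]; field_simp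
      have hor := horacle t ht'
      have hnp : (η/ω) * ∑ j, u t j * f j (x t) ≤ 0 := by
        rw [hA]
        nlinarith [mul_pos (div_pos hη₀ hω) hSt]
      rw [hstep]
      linarith [ih ht'.le]
  -- product formula for weights
  have hprod : ∀ t, t ≤ T → ∀ j,
      u t j = ∏ s ∈ Finset.range t, (1 + η * f j (x s) / ω) := by
    intro t
    induction t with
    | zero => intro _ j; simp [hu0]
    | succ t ih =>
      intro ht j
      have ht' : t < T := ht
      rw [Finset.prod_range_succ, ← ih ht'.le j, hu t ht' j]
  -- per-constraint regret bound on the sum of losses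
  have hsum : ∀ j, ∑ t ∈ Finset.range T, f j (x t)
      ≤ ω * Real.log m / η + η * ω * T := by
    intro j
    have hu_le : u T j ≤ (m:ℝ) :=
      le_trans (Finset.single_le_sum (fun k _ => (hpos T le_rfl k).le)
        (Finset.mem_univ j)) (hSle T le_rfl)
    have hlog : Real.log (u T j) ≤ Real.log m := Real.log_le_log (hpos T le_rfl j) hu_le
    have hlogprod : Real.log (u T j)
        = ∑ t ∈ Finset.range T, Real.log (1 + η * f j (x t) / ω) := by
      rw [hprod T le_rfl j]
      exact Real.log_prod
        (fun t ht => ne_of_gt (lt_of_lt_of_le (by norm_num)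
          (hfac t (Finset.mem_range.1 ht) j)))
    have hterm : ∀ t ∈ Finset.range T,
        η * f j (x t) / ω - η^2 ≤ Real.log (1 + η * f j (x t) / ω) := by
      intro t ht'
      have htT := Finset.mem_range.1 ht'
      have hfz := hfb j (x t) (hx t htT)
      set z := η * f j (x t) / ω with hzdef
      have habs : |z| ≤ η := by
        rw [hzdef, abs_div, abs_mul, abs_of_pos hη₀, abs_of_pos hω, div_le_iff₀ hω]
        nlinarith [abs_nonneg (f j (x t))]
      have hz2 : z^2 ≤ η^2 := by nlinarith [sq_abs z, abs_nonneg z]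
      have hk := key_log_quadratic z (le_trans habs hη)
      linarith
    have hsum_le : ∑ t ∈ Finset.range T, (η * f j (x t) / ω - η^2) ≤ Real.log m :=
      le_trans (Finset.sum_le_sum hterm) (le_trans (le_of_eq hlogprod.symm) hlog)
    have hexp : ∑ t ∈ Finset.range T, (η * f j (x t) / ω - η^2)
        = (η/ω) * (∑ t ∈ Finset.range T, f j (x t)) - η^2 * T := by
      rw [Finset.sum_sub_distrib, Finset.sum_const, Finset.card_range, nsmul_eq_mul,
        Finset.mul_sum]
      congr 1
      · exact Finset.sum_congr rfl fun t _ => by ring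
      · ring
    rw [hexp] at hsum_le
    have key2 : η * (∑ t ∈ Finset.range T, f j (x t))
        ≤ ω * Real.log m + η^2 * ω * T := by
      have h2 := mul_le_mul_of_nonneg_left hsum_le hω.le
      have h3 : ω * ((η/ω) * (∑ t ∈ Finset.range T, f j (x t)) - η^2 * T)
          = η * (∑ t ∈ Finset.range T, f j (x t)) - η^2 * ω * T := by
        field_simp
      rw [h3] at h2
      linarith
    have h4 : ω * Real.log m / η + η * ω * T
        = (ω * Real.log m + η^2 * ω * T) / η := by
      field_simp
    rw [h4, le_div_iff₀ hη₀]
    linarith [key2]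
  -- Jensen
  have hjensen : ∀ j, f j ((T:ℝ)⁻¹ • ∑ t ∈ Finset.range T, x t)
      ≤ (T:ℝ)⁻¹ * ∑ t ∈ Finset.range T, f j (x t) := by
    intro j
    rw [hxbar_eq]
    calc f j (∑ t ∈ Finset.range T, (T:ℝ)⁻¹ • x t)
        ≤ ∑ t ∈ Finset.range T, (T:ℝ)⁻¹ * f j (x t) :=
          (hfconv j).map_sum_le hw0 hw1 hmemx
      _ = (T:ℝ)⁻¹ * ∑ t ∈ Finset.range T, f j (x t) := (Finset.mul_sum _ _ _).symm
  -- main bound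
  have hmain : ∀ j, f j ((T:ℝ)⁻¹ • ∑ t ∈ Finset.range T, x t)
      ≤ η * ω + ω * Real.log m / (η * T) := by
    intro j
    have h1 := hjensen j
    have h3 : (T:ℝ)⁻¹ * ∑ t ∈ Finset.range T, f j (x t)
        ≤ (T:ℝ)⁻¹ * (ω * Real.log m / η + η * ω * T) :=
      mul_le_mul_of_nonneg_left (hsum j) (by positivity)
    have h4 : (T:ℝ)⁻¹ * (ω * Real.log m / η + η * ω * T)
        = η * ω + ω * Real.log m / (η * T) := by
      field_simp; ring
    linarith [h4 ▸ h3]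
  refine ⟨hbar_mem, hmain, ?_⟩
  intro ε hε hηeq hTge j
  have hL : 0 < Real.log m := Real.log_pos hm1
  have hLT : (0:ℝ) ≤ Real.log m / T := by positivity
  have hη2 : η^2 = Real.log m / T := by rw [hηeq, Real.sq_sqrt hLT]
  have hLeq : Real.log m = η^2 * T := by rw [hη2]; field_simp
  have heq : η * ω + ω * Real.log m / (η * T) = 2 * ω * η := by
    rw [hLeq]; field_simp; ring
  have hsq : 4 * ω^2 * η^2 ≤ ε^2 := by
    have h5 : 4 * ω^2 * Real.log m ≤ ε^2 * T := by
      rw [div_le_iff₀ (by positivity : (0:ℝ) < ε^2)] at hTge; linarith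
    rw [hLeq] at h5
    nlinarith [hTpos]
  have hfin : 2 * ω * η ≤ ε := by
    nlinarith [mul_pos (mul_pos two_pos hω) hη₀]
  have hb := hmain j
  rw [heq] at hb
  linarith
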